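/- The fixed point of the V-trace operator is the value function of the ρ̄-truncated policy: V_{π_{ρ̄}} is a fixed point of R, where π_{ρ̄}(a|s) = min(ρ̄ β(a|s), π(a|s)) / Σ_{b∈A} min(ρ̄ β(b|s), π(b|s)). Specifically, for every state s, E_{a∼β(·|s)}[ min(ρ̄, π(a|s)/β(a|s)) (r(s,a) + γ Σ_{s'} P(s'|s,a) V_{π_{ρ̄}}(s') − V_{π_{ρ̄}}(s)) ] = 0. -/

import Mathlib

open Finset

noncomputable section

variable {S A : Type*} [Fintype S] [Fintype A] [DecidableEq S]

/-- A policy assigns a probability distribution over actions to each state. -/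
def IsPolicy (p : S → A → ℝ) : Prop :=
  (∀ s a, 0 ≤ p s a) ∧ ∀ s, ∑ a, p s a = 1

/-- A finite Markov decision process with discount factor `γ ∈ [0,1)`. -/
structure FinMDP (S A : Type*) [Fintype S] [Fintype A] where
  P : S → A → S → ℝ
  P_nonneg : ∀ s a s', 0 ≤ P s a s'
  P_sum : ∀ s a, ∑ s', P s a s' = 1
  r : S → A → ℝ
  μ : S → ℝ
  μ_nonneg : ∀ s, 0 ≤ μ s
  μ_sum : ∑ s, μ s = 1
  γ : ℝ
  γ_nonneg : 0 ≤ γ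
  γ_lt_one : γ < 1

/-- One step of the state-distribution evolution under a policy. -/
def stepDist (M : FinMDP S A) (π : S → A → ℝ) (d : S → ℝ) : S → ℝ :=
  fun s' => ∑ s, ∑ a, d s * π s a * M.P s a s'

/-- Distribution of the state at time `t`, starting from `μ`, following `π`. -/
def stateDist (M : FinMDP S A) (π : S → A → ℝ) : ℕ → S → ℝ
  | 0 => M.μ
  | t + 1 => stepDist M π (stateDist M π t)

/-- Expected discounted return `J(π)` with initial distribution `μ`. -/
def Jret (M : FinMDP S A) (π : S → A → ℝ) : ℝ :=
  ∑' t : ℕ, M.γ ^ t * ∑ s, stateDist M π t s * ∑ a, π s a * M.r s a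

/-- Discounted future state visitation distribution `d^π`. -/
def dVisit (M : FinMDP S A) (π : S → A → ℝ) (s : S) : ℝ :=
  (1 - M.γ) * ∑' t : ℕ, M.γ ^ t * stateDist M π t s

/-- Distribution of the state at time `t` starting deterministically from `s₀`. -/
def stateDistFrom (M : FinMDP S A) (π : S → A → ℝ) (s₀ : S) : ℕ → S → ℝ
  | 0 => fun s => if s = s₀ then 1 else 0
  | t + 1 => stepDist M π (stateDistFrom M π s₀ t)

/-- State value function `V_π(s₀)`: expected discounted return starting from `s₀`. -/
def Vval (M : FinMDP S A) (π : S → A → ℝ) (s₀ : S) : ℝ :=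
  ∑' t : ℕ, M.γ ^ t * ∑ s, stateDistFrom M π s₀ t s * ∑ a, π s a * M.r s a

/-- State-action value function `Q_π(s,a)`. -/
def Qval (M : FinMDP S A) (π : S → A → ℝ) (s : S) (a : A) : ℝ :=
  M.r s a + M.γ * ∑ s', M.P s a s' * Vval M π s'

/-- Advantage function `A_π(s,a) = Q_π(s,a) - V_π(s)`. -/
def Adv (M : FinMDP S A) (π : S → A → ℝ) (s : S) (a : A) : ℝ :=
  Qval M π s a - Vval M π s

/-- Total variation distance between two distributions over actions. -/
def DTV (p q : A → ℝ) : ℝ := (1 / 2) * ∑ a, |p a - q a|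

/-- KL divergence between two distributions over actions. -/
def DKL (p q : A → ℝ) : ℝ := ∑ a, p a * Real.log (p a / q a)

/-- The value function of the `ρ̄`-truncated policy has zero V-trace Bellman error,
hence is a fixed point of the V-trace operator. -/
theorem vtrace_fixed_point (M : FinMDP S A) (π β : S → A → ℝ)
    (hπ : IsPolicy π) (hβ : IsPolicy β) (hβpos : ∀ s a, 0 < β s a)
    (ρbar : ℝ) (hρ : 0 < ρbar) (Vρ : S → ℝ)
    (hBell : ∀ s, Vρ s = ∑ a,
        (min (ρbar * β s a) (π s a) / ∑ b, min (ρbar * β s b) (π s b)) *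
          (M.r s a + M.γ * ∑ s', M.P s a s' * Vρ s')) :
    ∀ s, ∑ a, β s a * min ρbar (π s a / β s a) *
        (M.r s a + M.γ * (∑ s', M.P s a s' * Vρ s') - Vρ s) = 0 := by
  intro s
  set m : A → ℝ := fun a => min (ρbar * β s a) (π s a) with hm
  set Q : A → ℝ := fun a => M.r s a + M.γ * ∑ s', M.P s a s' * Vρ s' with hQ
  have hmkey : ∀ a, β s a * min ρbar (π s a / β s a) = m a := by
    intro a
    have hb := hβpos s a
    rw [mul_min_of_nonneg _ _ hb.le, mul_div_cancel₀ _ hb.ne', mul_comm (β s a) ρbar]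
  have hZpos : 0 < ∑ b, m b := by
    obtain ⟨a, ha⟩ : ∃ a, 0 < π s a := by
      by_contra h
      push_neg at h
      have : ∑ a, π s a ≤ 0 := Finset.sum_nonpos (fun a _ => h a)
      rw [hπ.2 s] at this; linarith
    refine Finset.sum_pos' (fun b _ => le_min (mul_nonneg hρ.le (hβpos s b).le) (hπ.1 s b))
      ⟨a, Finset.mem_univ a, lt_min (mul_pos hρ (hβpos s a)) ha⟩
  have hsumQ : ∑ a, m a * Q a = (∑ b, m b) * Vρ s := by
    have h := hBell s
    rw [h]
    rw [Finset.mul_sum]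
    refine Finset.sum_congr rfl (fun a _ => ?_)
    have hZ : (∑ b, min (ρbar * β s b) (π s b)) ≠ 0 := hZpos.ne'
    simp only [hm, hQ]
    field_simp
  calc ∑ a, β s a * min ρbar (π s a / β s a) * (Q a - Vρ s)
      = ∑ a, (m a * Q a - m a * Vρ s) := by
        refine Finset.sum_congr rfl (fun a _ => ?_); rw [hmkey a]; ring
    _ = (∑ a, m a * Q a) - (∑ a, m a) * Vρ s := by
        rw [Finset.sum_sub_distrib, Finset.sum_mul]
    _ = 0 := by rw [hsumQ]; ring
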